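/- In the limited-supply setting with k units of each of m items, values in {0} ∪ [v_min, v_max], ρ = v_max/v_min, r = (2mρ)^{1/k}, and pricing function p(y) = (v_min/(2m))·r^y, the posted-price mechanism M_p never sells more than k units of any item: at termination, the total number of units sold of each item j is at most k. -/

import Mathlib

open Finset

/-- Number of units of item `j` sold to the buyers arriving strictly before time `i`,
under the allocation `S`. -/
def soldCount {m n : ℕ} (S : Fin n → Finset (Fin m)) (j : Fin m) (i : ℕ) : ℕ :=
  (Finset.univ.filter (fun i' : Fin n => (i' : ℕ) < i ∧ j ∈ S i')).card

/-- The limited-supply pricing function `p(y) = (v_min/(2m))·r^y` with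
`r = (2mρ)^(1/k)` and `ρ = v_max/v_min`. -/
noncomputable def limPrice (m k : ℕ) (vmin vmax : ℝ) (y : ℕ) : ℝ :=
  vmin / (2 * m) * ((2 * (m:ℝ) * (vmax/vmin)) ^ ((1:ℝ)/(k:ℝ))) ^ y

/-- in the limited-supply setting (`k` units of each of `m` items, values
in `{0} ∪ [v_min, v_max]`), the posted-price mechanism with pricing function
`p(y) = (v_min/(2m))·(2mρ)^(y/k)` never sells more than `k` units of any item: at
termination, at most `k` units of each item `j` have been sold. -/
theorem stmt11 (m k n : ℕ) (vmin vmax : ℝ)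
    (hm : 0 < m) (hk : 0 < k) (hmin : 0 < vmin) (hle : vmin ≤ vmax)
    (v : Fin n → Finset (Fin m) → ℝ)
    (hv0 : ∀ i, v i ∅ = 0)
    (hvrange : ∀ i T, v i T = 0 ∨ (vmin ≤ v i T ∧ v i T ≤ vmax))
    (S : Fin n → Finset (Fin m))
    (hopt : ∀ i : Fin n, ∀ T : Finset (Fin m),
      v i (S i) - ∑ j ∈ S i, limPrice m k vmin vmax (soldCount S j i) ≥
        v i T - ∑ j ∈ T, limPrice m k vmin vmax (soldCount S j i))
    (hpos : ∀ i : Fin n, S i ≠ ∅ →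
      0 < v i (S i) - ∑ j ∈ S i, limPrice m k vmin vmax (soldCount S j i)) :
    ∀ j : Fin m, soldCount S j n ≤ k := by
  intro j
  by_contra h
  push_neg at h
  set x : ℝ := 2 * (m:ℝ) * (vmax/vmin) with hxdef
  set r : ℝ := x ^ ((1:ℝ)/(k:ℝ)) with hrdef
  have hmR : (1:ℝ) ≤ (m:ℝ) := by exact_mod_cast hm
  have hρ : (1:ℝ) ≤ vmax / vmin := (one_le_div hmin).mpr hle
  have hx1 : (1:ℝ) ≤ x := by nlinarith
  have hx0 : (0:ℝ) ≤ x := by linarith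
  have hr1 : (1:ℝ) ≤ r := Real.one_le_rpow hx1 (by positivity)
  have hrk : r ^ k = x := by
    rw [hrdef, ← Real.rpow_natCast (x ^ ((1:ℝ)/(k:ℝ))) k, ← Real.rpow_mul hx0]
    rw [one_div, inv_mul_cancel₀ (by exact_mod_cast hk.ne' : ((k:ℝ)) ≠ 0), Real.rpow_one]
  -- find the buyer making the (k+1)-th purchase of item j
  set A : Finset (Fin n) := Finset.univ.filter (fun i' => j ∈ S i') with hA
  have hcardA : k + 1 ≤ A.card := by
    have hsn : soldCount S j n = A.card := by
      unfold soldCount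
      congr 1
      apply Finset.filter_congr
      intro i' _
      simp [i'.isLt]
    omega
  obtain ⟨B, hBA, hBcard⟩ := Finset.exists_subset_card_eq hcardA
  have hBne : B.Nonempty := Finset.card_pos.mp (by omega)
  set i : Fin n := B.max' hBne with hi
  have hiB : i ∈ B := B.max'_mem hBne
  have hjSi : j ∈ S i := by
    have := hBA hiB
    simpa [hA] using this
  have hsold : k ≤ soldCount S j i := by
    have hsub : B.erase i ⊆ Finset.univ.filter (fun i' : Fin n => (i' : ℕ) < (i:ℕ) ∧ j ∈ S i') := by
      intro b hb
      rw [Finset.mem_erase] at hb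
      have hble : b ≤ i := B.le_max' b hb.2
      have hblt : b < i := lt_of_le_of_ne hble hb.1
      have hbA := hBA hb.2
      simp only [hA, Finset.mem_filter, Finset.mem_univ, true_and] at hbA
      simp [hbA, hblt]
    have := Finset.card_le_card hsub
    rw [Finset.card_erase_of_mem hiB, hBcard] at this
    unfold soldCount
    omega
  -- price of item j is at least vmax
  have hpr : vmax ≤ limPrice m k vmin vmax (soldCount S j i) := by
    unfold limPrice
    have hc : (0:ℝ) < vmin / (2 * m) := by positivity
    have hpow : x ≤ r ^ (soldCount S j i) := by
      rw [← hrk]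
      exact pow_le_pow_right₀ hr1 hsold
    have hvx : vmax = vmin / (2 * m) * x := by
      rw [hxdef]
      field_simp
    calc vmax = vmin / (2 * m) * x := hvx
      _ ≤ vmin / (2 * m) * r ^ (soldCount S j i) := by
          exact mul_le_mul_of_nonneg_left hpow hc.le
  -- all prices nonnegative
  have hnn : ∀ j' ∈ S i, 0 ≤ limPrice m k vmin vmax (soldCount S j' i) := by
    intro j' _
    unfold limPrice
    have hr0 : (0:ℝ) ≤ r := le_trans zero_le_one hr1
    positivity
  have hsum : limPrice m k vmin vmax (soldCount S j i) ≤
      ∑ j' ∈ S i, limPrice m k vmin vmax (soldCount S j' i) :=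
    Finset.single_le_sum hnn hjSi
  have hvle : v i (S i) ≤ vmax := by
    rcases hvrange i (S i) with h0 | ⟨_, h2⟩
    · linarith
    · exact h2
  have hne : S i ≠ ∅ := fun hemp => by simp [hemp] at hjSi
  have := hpos i hne
  linarith
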